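/- Let ℓ ≥ 2 and let R = {±e_i : 1 ≤ i ≤ ℓ} ∪ {±e_i ± e_j : 1 ≤ i < j ≤ ℓ} ⊂ ℝ^ℓ be the root system of type B_ℓ. Then the set Γ consisting of the vectors e_{2j−1} − e_{2j} and e_{2j−1} + e_{2j} for 1 ≤ j ≤ ⌊ℓ/2⌋, together with the vector e_ℓ when ℓ is odd, is a strongly orthogonal subset of R with ℓ elements, and every strongly orthogonal subset of R has at most ℓ elements. -/

import Mathlib

/-- A subset `S` of a set `R` of vectors is *strongly orthogonal* (relative to
`R`) if `S ⊆ R` and for all distinct `α, β ∈ S` one has `α ≠ -β`,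
`α + β ∉ R` and `α - β ∉ R`. -/
def IsStronglyOrthSubset {V : Type*} [AddCommGroup V] (R S : Set V) : Prop :=
  S ⊆ R ∧ S.Pairwise fun α β => α ≠ -β ∧ α + β ∉ R ∧ α - β ∉ R

/-- The `i`-th standard basis vector of `ℝⁿ`, in 1-based indexing. -/
noncomputable def stdVec (n : ℕ) (i : ℕ) : EuclideanSpace ℝ (Fin n) :=
  (WithLp.equiv 2 (Fin n → ℝ)).symm fun j => if (j : ℕ) + 1 = i then 1 else 0

namespace TypeBAux


lemma stdVec_apply (n i : ℕ) (k : Fin n) : stdVec n i k = if (k:ℕ)+1 = i then 1 else 0 := rfl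

lemma stdVec_apply_of_eq {n i : ℕ} {k : Fin n} (h : (k:ℕ)+1 = i) : stdVec n i k = 1 := by
  rw [stdVec_apply, if_pos h]

lemma stdVec_apply_of_ne {n i : ℕ} {k : Fin n} (h : (k:ℕ)+1 ≠ i) : stdVec n i k = 0 := by
  rw [stdVec_apply, if_neg h]

/-- single basis vector indexed by `Fin n` -/
noncomputable def E {n : ℕ} (a : Fin n) : EuclideanSpace ℝ (Fin n) := stdVec n ((a:ℕ)+1)

lemma E_apply {n : ℕ} (a k : Fin n) : E a k = if k = a then 1 else 0 := by
  rw [E, stdVec_apply]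
  by_cases h : k = a
  · subst h; simp
  · rw [if_neg h, if_neg (by simpa [Fin.ext_iff] using h)]

lemma stdVec_eq_E {n i : ℕ} (h1 : 1 ≤ i) (h2 : i ≤ n) :
    stdVec n i = E (⟨i - 1, by omega⟩ : Fin n) := by
  refine PiLp.ext fun k => ?_
  rw [E_apply, stdVec_apply]
  by_cases h : (k:ℕ) + 1 = i
  · rw [if_pos h, if_pos (by ext; simp; omega)]
  · rw [if_neg h, if_neg (by rw [Fin.ext_iff]; simp; omega)]

def isRoot {n : ℕ} (x : EuclideanSpace ℝ (Fin n)) : Prop :=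
  (∃ a, x a ≠ 0) ∧ (∀ k, x k = -1 ∨ x k = 0 ∨ x k = 1) ∧
    ∀ a b c : Fin n, x a ≠ 0 → x b ≠ 0 → x c ≠ 0 → a = b ∨ a = c ∨ b = c

/-- normal form -/
def NF {n : ℕ} (x : EuclideanSpace ℝ (Fin n)) : Prop :=
  (∃ (a : Fin n) (s : ℝ), (s = 1 ∨ s = -1) ∧ x = s • E a) ∨
  (∃ (a b : Fin n) (s t : ℝ), a < b ∧ (s = 1 ∨ s = -1) ∧ (t = 1 ∨ t = -1) ∧
    x = s • E a + t • E b)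

lemma nf_isRoot {n : ℕ} {x : EuclideanSpace ℝ (Fin n)} (h : NF x) : isRoot x := by
  rcases h with ⟨a, s, hs, rfl⟩ | ⟨a, b, s, t, hab, hs, ht, rfl⟩
  · have hcoord : ∀ k, (s • E a) k = if k = a then s else 0 := by
      intro k
      rw [PiLp.smul_apply, E_apply, smul_eq_mul]
      split_ifs <;> ring
    refine ⟨⟨a, by rw [hcoord, if_pos rfl]; rcases hs with rfl | rfl <;> norm_num⟩,
      fun k => ?_, fun p q r hp hq hr => ?_⟩
    · rw [hcoord]; split_ifs with h
      · rcases hs with rfl | rfl <;> simp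
      · simp
    · rw [hcoord] at hp hq
      split_ifs at hp hq with h1 h2 <;> first | (left; rw [h1, h2]) | simp_all
  · have hcoord : ∀ k, (s • E a + t • E b) k =
        if k = a then s else if k = b then t else 0 := by
      intro k
      rw [PiLp.add_apply, PiLp.smul_apply, PiLp.smul_apply, E_apply, E_apply,
        smul_eq_mul, smul_eq_mul]
      rcases eq_or_ne k a with rfl | h1
      · rw [if_pos rfl, if_neg hab.ne, if_pos rfl]; ring
      · rw [if_neg h1, if_neg h1]
        split_ifs <;> ring
    have hane : a ≠ b := hab.ne
    refine ⟨⟨a, by rw [hcoord, if_pos rfl]; rcases hs with rfl | rfl <;> norm_num⟩,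
      fun k => ?_, fun p q r hp hq hr => ?_⟩
    · rw [hcoord]; split_ifs with h
      · rcases hs with rfl | rfl <;> simp
      · rcases ht with rfl | rfl <;> simp
      · simp
    · rw [hcoord] at hp hq hr
      split_ifs at hp hq hr <;> simp_all

lemma isRoot_nf {n : ℕ} {x : EuclideanSpace ℝ (Fin n)} (h : isRoot x) : NF x := by
  obtain ⟨⟨a, ha⟩, hval, h3⟩ := h
  by_cases hall : ∀ b, b ≠ a → x b = 0
  · left
    refine ⟨a, x a, ?_, ?_⟩
    · rcases hval a with h' | h' | h' <;> tauto
    · refine PiLp.ext fun k => ?_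
      rw [PiLp.smul_apply, E_apply, smul_eq_mul]
      rcases eq_or_ne k a with rfl | hk
      · rw [if_pos rfl, mul_one]
      · rw [if_neg hk, mul_zero, hall k hk]
  · push_neg at hall
    obtain ⟨b, hba, hb⟩ := hall
    right
    have hz : ∀ c, c ≠ a → c ≠ b → x c = 0 := by
      intro c hca hcb
      by_contra hc
      rcases h3 a b c ha hb hc with h' | h' | h' <;> simp_all [eq_comm]
    have main : ∀ p q : Fin n, p < q → x p ≠ 0 → x q ≠ 0 →
        (∀ c, c ≠ p → c ≠ q → x c = 0) →
        ∃ (a' b' : Fin n) (s t : ℝ), a' < b' ∧ (s = 1 ∨ s = -1) ∧ (t = 1 ∨ t = -1) ∧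
          x = s • E a' + t • E b' := by
      intro p q hpq hp hq hzz
      refine ⟨p, q, x p, x q, hpq, ?_, ?_, ?_⟩
      · rcases hval p with h' | h' | h' <;> tauto
      · rcases hval q with h' | h' | h' <;> tauto
      · refine PiLp.ext fun k => ?_
        rw [PiLp.add_apply, PiLp.smul_apply, PiLp.smul_apply, E_apply, E_apply,
          smul_eq_mul, smul_eq_mul]
        rcases eq_or_ne k p with rfl | h1
        · rw [if_pos rfl, if_neg hpq.ne]; ring
        · rcases eq_or_ne k q with rfl | h2
          · rw [if_neg h1, if_pos rfl]; ring
          · rw [if_neg h1, if_neg h2, hzz k h1 h2]; ring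
    rcases lt_or_gt_of_ne hba with h' | h'
    · exact main b a h' hb ha (fun c h1 h2 => hz c h2 h1)
    · exact main a b h' ha hb hz

lemma mem_R_iff {n : ℕ} (x : EuclideanSpace ℝ (Fin n)) :
    (x ∈ ({x | ∃ i : ℕ, 1 ≤ i ∧ i ≤ n ∧ (x = stdVec n i ∨ x = -stdVec n i)} ∪
      {x | ∃ i j : ℕ, 1 ≤ i ∧ i < j ∧ j ≤ n ∧
        (x = stdVec n i + stdVec n j ∨ x = stdVec n i - stdVec n j ∨
         x = -stdVec n i + stdVec n j ∨ x = -stdVec n i - stdVec n j)} :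
        Set (EuclideanSpace ℝ (Fin n)))) ↔ NF x := by
  constructor
  · rintro (⟨i, h1, h2, h3 | h3⟩ | ⟨i, j, h1, h2, h3, h4⟩)
    · exact Or.inl ⟨⟨i - 1, by omega⟩, 1, Or.inl rfl,
        by rw [h3, stdVec_eq_E h1 h2, one_smul]⟩
    · exact Or.inl ⟨⟨i - 1, by omega⟩, -1, Or.inr rfl,
        by rw [h3, stdVec_eq_E h1 h2, neg_one_smul]⟩
    · have hi2 : i ≤ n := by omega
      have hj1 : 1 ≤ j := by omega
      have hab : (⟨i - 1, by omega⟩ : Fin n) < ⟨j - 1, by omega⟩ := by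
        rw [Fin.mk_lt_mk]; omega
      rw [stdVec_eq_E h1 hi2, stdVec_eq_E hj1 h3] at h4
      rcases h4 with h4 | h4 | h4 | h4
      · exact Or.inr ⟨_, _, 1, 1, hab, Or.inl rfl, Or.inl rfl,
          by rw [h4, one_smul, one_smul]⟩
      · exact Or.inr ⟨_, _, 1, -1, hab, Or.inl rfl, Or.inr rfl,
          by rw [h4, one_smul, neg_one_smul, sub_eq_add_neg]⟩
      · exact Or.inr ⟨_, _, -1, 1, hab, Or.inr rfl, Or.inl rfl,
          by rw [h4, one_smul, neg_one_smul]⟩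
      · exact Or.inr ⟨_, _, -1, -1, hab, Or.inr rfl, Or.inr rfl,
          by rw [h4, neg_one_smul, neg_one_smul, sub_eq_add_neg]⟩
  · rintro (⟨a, s, hs, rfl⟩ | ⟨a, b, s, t, hab, hs, ht, rfl⟩)
    · refine Or.inl ⟨(a:ℕ) + 1, by omega, by omega, ?_⟩
      rcases hs with rfl | rfl
      · exact Or.inl (by rw [one_smul]; rfl)
      · exact Or.inr (by rw [neg_one_smul]; rfl)
    · refine Or.inr ⟨(a:ℕ) + 1, (b:ℕ) + 1, by omega,
        by have := hab; rw [Fin.lt_def] at this; omega, by omega, ?_⟩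
      have ea : stdVec n ((a:ℕ)+1) = E a := rfl
      have eb : stdVec n ((b:ℕ)+1) = E b := rfl
      rw [ea, eb]
      rcases hs with rfl | rfl <;> rcases ht with rfl | rfl
      · exact Or.inl (by rw [one_smul, one_smul])
      · exact Or.inr (Or.inl (by rw [one_smul, neg_one_smul, sub_eq_add_neg]))
      · exact Or.inr (Or.inr (Or.inl (by rw [one_smul, neg_one_smul])))
      · exact Or.inr (Or.inr (Or.inr (by rw [neg_one_smul, neg_one_smul, sub_eq_add_neg])))

lemma inner_zero {n : ℕ} {x y : EuclideanSpace ℝ (Fin n)} (hx : isRoot x) (hy : isRoot y)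
    (hne : x ≠ y) (hne' : x ≠ -y) (hadd : ¬ isRoot (x + y)) (hsub : ¬ isRoot (x - y)) :
    ∑ k, x k * y k = 0 := by
  by_contra hinner
  -- find a common support element
  have ⟨a, ha⟩ : ∃ a, x a * y a ≠ 0 := by
    by_contra h
    push_neg at h
    exact hinner (Finset.sum_eq_zero fun k _ => h k)
  have hxa : x a ≠ 0 := fun h => ha (by rw [h, zero_mul])
  have hya : y a ≠ 0 := fun h => ha (by rw [h, mul_zero])
  obtain ⟨-, hvx, h3x⟩ := hx
  obtain ⟨-, hvy, h3y⟩ := hy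
  set σ : ℝ := -(x a * y a) with hσdef
  have hσ : σ = 1 ∨ σ = -1 := by
    rcases hvx a with h1 | h1 | h1 <;> rcases hvy a with h2 | h2 | h2 <;>
      simp_all [hσdef]
  -- the candidate root
  set γ : EuclideanSpace ℝ (Fin n) := x + σ • y with hγdef
  have hγapp : ∀ k, γ k = x k + σ * y k := fun k => by
    rw [hγdef, PiLp.add_apply, PiLp.smul_apply, smul_eq_mul]
  have hγa : γ a = 0 := by
    rw [hγapp]
    rcases hvx a with h1 | h1 | h1 <;> rcases hvy a with h2 | h2 | h2 <;>
      simp_all [hσdef] <;> ring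
  have hx2 : ∀ p q : Fin n, p ≠ q → p ≠ a → q ≠ a → x p ≠ 0 → x q ≠ 0 → False := by
    intro p q h1 h2 h3 h4 h5
    rcases h3x p q a h4 h5 hxa with h | h | h <;> tauto
  have hy2 : ∀ p q : Fin n, p ≠ q → p ≠ a → q ≠ a → y p ≠ 0 → y q ≠ 0 → False := by
    intro p q h1 h2 h3 h4 h5
    rcases h3y p q a h4 h5 hya with h | h | h <;> tauto
  -- entries of γ are in {-1, 0, 1}
  have hentry : ∀ k, γ k = -1 ∨ γ k = 0 ∨ γ k = 1 := by
    intro k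
    by_contra hbad
    have hk : x k ≠ 0 ∧ y k ≠ 0 ∧ x k * y k = σ := by
      rw [hγapp] at hbad
      push_neg at hbad
      rcases hvx k with h1 | h1 | h1 <;> rcases hvy k with h2 | h2 | h2 <;>
        rcases hσ with h3 | h3 <;> rw [h1, h2, h3] at hbad <;> rw [h1, h2, h3] <;>
        norm_num at hbad <;> norm_num
    have hka : k ≠ a := by
      rintro rfl
      rw [hγapp] at hbad
      rw [hγapp] at hγa
      exact hbad (Or.inr (Or.inl hγa))
    -- then the inner product is -σ + σ = 0, contradiction
    apply hinner
    have hzero : ∀ m, m ≠ a → m ≠ k → x m * y m = 0 := by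
      intro m hma hmk
      by_cases hxm : x m = 0
      · rw [hxm, zero_mul]
      · exact absurd (hx2 m k hmk hma hka hxm hk.1) not_false
    rw [show (Finset.univ : Finset (Fin n)) = insert a (insert k (Finset.univ.filter
      fun m => m ≠ a ∧ m ≠ k)) from ?_]
    · rw [Finset.sum_insert, Finset.sum_insert]
      · have h1 : ∑ m ∈ Finset.univ.filter (fun m => m ≠ a ∧ m ≠ k), x m * y m = 0 :=
          Finset.sum_eq_zero fun m hm => by
            simp only [Finset.mem_filter] at hm
            exact hzero m hm.2.1 hm.2.2
        rw [h1, hk.2.2, show x a * y a = -σ by rw [hσdef]; ring]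
        ring
      · simp [hka.symm]
      · simp [hka]
        intro h; exact absurd h.symm hka
    · ext m
      simp only [Finset.mem_insert, Finset.mem_filter, Finset.mem_univ, true_and]
      tauto
  -- γ is nonzero somewhere
  have hnonzero : ∃ k, γ k ≠ 0 := by
    by_contra h
    push_neg at h
    have : x = -σ • y := by
      refine PiLp.ext fun k => ?_
      have := h k
      rw [hγapp] at this
      rw [PiLp.smul_apply, smul_eq_mul]
      linarith
    rcases hσ with h1 | h1
    · rw [h1] at this; rw [neg_one_smul] at this; exact hne' this
    · rw [h1] at this; norm_num at this; exact hne this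
  -- γ has at most two nonzero entries
  have h3γ : ∀ p q r : Fin n, γ p ≠ 0 → γ q ≠ 0 → γ r ≠ 0 → p = q ∨ p = r ∨ q = r := by
    intro p q r hp hq hr
    by_contra hcon
    push_neg at hcon
    obtain ⟨hpq, hpr, hqr⟩ := hcon
    have hsupp : ∀ m, γ m ≠ 0 → (x m ≠ 0 ∨ y m ≠ 0) := by
      intro m hm
      by_contra h
      push_neg at h
      rw [hγapp, h.1, h.2] at hm
      simp at hm
    have hnea : ∀ m, γ m ≠ 0 → m ≠ a := fun m hm h => hm (h ▸ hγa)
    have hya' : ∀ m, σ * y m ≠ 0 ↔ y m ≠ 0 := fun m => by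
      rcases hσ with h | h <;> rw [h] <;> norm_num
    rcases hsupp p hp with h1 | h1 <;> rcases hsupp q hq with h2 | h2 <;>
      rcases hsupp r hr with h3 | h3
    · exact hx2 p q hpq (hnea p hp) (hnea q hq) h1 h2
    · exact hx2 p q hpq (hnea p hp) (hnea q hq) h1 h2
    · exact hx2 p r hpr (hnea p hp) (hnea r hr) h1 h3
    · exact hy2 q r hqr (hnea q hq) (hnea r hr) h2 h3
    · exact hx2 q r hqr (hnea q hq) (hnea r hr) h2 h3
    · exact hy2 p r hpr (hnea p hp) (hnea r hr) h1 h3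
    · exact hy2 p q hpq (hnea p hp) (hnea q hq) h1 h2
    · exact hy2 p q hpq (hnea p hp) (hnea q hq) h1 h2
  have : isRoot γ := ⟨hnonzero, hentry, h3γ⟩
  rcases hσ with h1 | h1
  · rw [hγdef, h1, one_smul] at this; exact hadd this
  · rw [hγdef, h1, neg_one_smul, ← sub_eq_add_neg] at this; exact hsub this

lemma ncard_le {n : ℕ} {R S : Set (EuclideanSpace ℝ (Fin n))}
    (hR : ∀ x, x ∈ R ↔ NF x) (h : IsStronglyOrthSubset R S) : S.ncard ≤ n := by
  obtain ⟨hsub, hpair⟩ := h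
  have hroot : ∀ x ∈ S, isRoot x := fun x hx => nf_isRoot ((hR x).1 (hsub hx))
  have hnz : ∀ x ∈ S, x ≠ 0 := by
    intro x hx h0
    obtain ⟨⟨a, ha⟩, -, -⟩ := hroot x hx
    rw [h0] at ha
    exact ha rfl
  have horth : ∀ x ∈ S, ∀ y ∈ S, x ≠ y → (inner ℝ x y : ℝ) = 0 := by
    intro x hx y hy hxy
    obtain ⟨h1, h2, h3⟩ := hpair hx hy hxy
    have : ∑ k, x k * y k = 0 :=
      inner_zero (hroot x hx) (hroot y hy) hxy h1
        (fun hr => h2 ((hR _).2 (isRoot_nf hr)))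
        (fun hr => h3 ((hR _).2 (isRoot_nf hr)))
    simpa [PiLp.inner_apply, RCLike.inner_apply, mul_comm] using this
  have hli : LinearIndependent ℝ (fun s : S => (s : EuclideanSpace ℝ (Fin n))) :=
    linearIndependent_of_ne_zero_of_inner_eq_zero (fun i => hnz i i.2)
      (fun i j hij => horth i i.2 j j.2 (fun h => hij (Subtype.ext h)))
  have hfin : S.Finite := hli.setFinite
  letI := hfin.fintype
  have hcard := hli.fintype_card_le_finrank
  rw [finrank_euclideanSpace_fin] at hcard
  calc S.ncard = Fintype.card S := by rw [Set.ncard_eq_toFinset_card', Set.toFinset_card]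
    _ ≤ n := hcard

lemma stdVec_eq_zero {n i : ℕ} (h : n < i) : stdVec n i = 0 := by
  refine PiLp.ext fun k => ?_
  rw [stdVec_apply, if_neg (by omega)]
  rfl

lemma not_isRoot_two {n : ℕ} (x : EuclideanSpace ℝ (Fin n)) (p : Fin n)
    (hp : x p = 2 ∨ x p = -2) : ¬ isRoot x := by
  rintro ⟨-, hv, -⟩
  rcases hv p with h | h | h <;> rcases hp with h' | h' <;> rw [h] at h' <;> norm_num at h'

lemma not_isRoot_three {n : ℕ} (x : EuclideanSpace ℝ (Fin n)) (p q r : Fin n)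
    (hpq : p ≠ q) (hpr : p ≠ r) (hqr : q ≠ r)
    (hp : x p ≠ 0) (hq : x q ≠ 0) (hr : x r ≠ 0) : ¬ isRoot x := by
  rintro ⟨-, -, h3⟩
  rcases h3 p q r hp hq hr with h | h | h <;> tauto

/-- uniform parametrization of Γ's elements -/
noncomputable def g (l m : ℕ) (s : ℝ) : EuclideanSpace ℝ (Fin l) :=
  stdVec l (2*m+1) + s • stdVec l (2*m+2)

lemma g_apply (l m : ℕ) (s : ℝ) (c : Fin l) :
    g l m s c = (if (c:ℕ)+1 = 2*m+1 then 1 else 0) + s * (if (c:ℕ)+1 = 2*m+2 then 1 else 0) := by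
  rw [g, PiLp.add_apply, PiLp.smul_apply, smul_eq_mul, stdVec_apply, stdVec_apply]

noncomputable def f0 (l k : ℕ) : EuclideanSpace ℝ (Fin l) :=
  stdVec l (2*(k/2)+1) + (if k % 2 = 0 then (-1:ℝ) else 1) • stdVec l (2*(k/2)+2)

lemma f0_apply (l k : ℕ) (c : Fin l) :
    f0 l k c = (if (c:ℕ)+1 = 2*(k/2)+1 then 1 else 0) +
      (if k % 2 = 0 then (-1:ℝ) else 1) * (if (c:ℕ)+1 = 2*(k/2)+2 then 1 else 0) := by
  rw [f0, PiLp.add_apply, PiLp.smul_apply, smul_eq_mul, stdVec_apply, stdVec_apply]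

lemma f0_even (l k : ℕ) (hk : k % 2 = 0) :
    f0 l k = stdVec l (2*(k/2)+1) - stdVec l (2*(k/2)+2) := by
  rw [f0, if_pos hk, neg_one_smul, sub_eq_add_neg]

lemma f0_odd (l k : ℕ) (hk : k % 2 = 1) :
    f0 l k = stdVec l (2*(k/2)+1) + stdVec l (2*(k/2)+2) := by
  rw [f0, if_neg (by omega), one_smul]

end TypeBAux

section
open TypeBAux
set_option maxHeartbeats 1000000 in
/-- In the root system of type `B_ℓ`, the set `Γ` consisting of
`e_{2j−1} ± e_{2j}` for `1 ≤ j ≤ ⌊ℓ/2⌋`, together with `e_ℓ` when `ℓ` is odd,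
is a strongly orthogonal subset with `ℓ` elements, and every strongly
orthogonal subset has at most `ℓ` elements. -/
theorem typeB_max_strongly_orthogonal (l : ℕ) (hl : 2 ≤ l)
    (R : Set (EuclideanSpace ℝ (Fin l)))
    (hR : R = {x | ∃ i : ℕ, 1 ≤ i ∧ i ≤ l ∧
        (x = stdVec l i ∨ x = -stdVec l i)} ∪
      {x | ∃ i j : ℕ, 1 ≤ i ∧ i < j ∧ j ≤ l ∧
        (x = stdVec l i + stdVec l j ∨ x = stdVec l i - stdVec l j ∨
         x = -stdVec l i + stdVec l j ∨ x = -stdVec l i - stdVec l j)})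
    (Γ : Set (EuclideanSpace ℝ (Fin l)))
    (hΓ : Γ = {x | ∃ j : ℕ, 1 ≤ j ∧ j ≤ l / 2 ∧
        (x = stdVec l (2 * j - 1) - stdVec l (2 * j) ∨
         x = stdVec l (2 * j - 1) + stdVec l (2 * j))} ∪
      {x | Odd l ∧ x = stdVec l l}) :
    IsStronglyOrthSubset R Γ ∧ Γ.ncard = l ∧
      ∀ S : Set (EuclideanSpace ℝ (Fin l)),
        IsStronglyOrthSubset R S → S.ncard ≤ l := by
  subst hR hΓ
  -- notation
  set Rset : Set (EuclideanSpace ℝ (Fin l)) := {x | ∃ i : ℕ, 1 ≤ i ∧ i ≤ l ∧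
        (x = stdVec l i ∨ x = -stdVec l i)} ∪
      {x | ∃ i j : ℕ, 1 ≤ i ∧ i < j ∧ j ≤ l ∧
        (x = stdVec l i + stdVec l j ∨ x = stdVec l i - stdVec l j ∨
         x = -stdVec l i + stdVec l j ∨ x = -stdVec l i - stdVec l j)} with hRset
  set Γset : Set (EuclideanSpace ℝ (Fin l)) := {x | ∃ j : ℕ, 1 ≤ j ∧ j ≤ l / 2 ∧
        (x = stdVec l (2 * j - 1) - stdVec l (2 * j) ∨
         x = stdVec l (2 * j - 1) + stdVec l (2 * j))} ∪
      {x | Odd l ∧ x = stdVec l l} with hΓset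
  have hnotin : ∀ x : EuclideanSpace ℝ (Fin l), ¬ isRoot x → x ∉ Rset :=
    fun x hx hmem => hx (nf_isRoot ((mem_R_iff x).1 hmem))
  -- uniform representation of Γ's elements
  have hrep : ∀ α ∈ Γset, ∃ m s, 2*m+1 ≤ l ∧ (s = (1:ℝ) ∨ s = -1) ∧ α = g l m s := by
    rintro α (⟨j, hj1, hj2, hα | hα⟩ | ⟨hodd, hα⟩)
    · refine ⟨j - 1, -1, by omega, Or.inr rfl, ?_⟩
      rw [hα, g, show 2*(j-1)+1 = 2*j-1 by omega, show 2*(j-1)+2 = 2*j by omega,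
        neg_one_smul, sub_eq_add_neg]
    · refine ⟨j - 1, 1, by omega, Or.inl rfl, ?_⟩
      rw [hα, g, show 2*(j-1)+1 = 2*j-1 by omega, show 2*(j-1)+2 = 2*j by omega, one_smul]
    · obtain ⟨t, ht⟩ := hodd
      refine ⟨l / 2, 1, by omega, Or.inl rfl, ?_⟩
      rw [hα, g, show 2*(l/2)+1 = l by omega, stdVec_eq_zero (show l < 2*(l/2)+2 by omega),
        one_smul, add_zero]
  -- Part 1: Γ ⊆ R
  have hsubset : Γset ⊆ Rset := by
    rintro α (⟨j, hj1, hj2, hα | hα⟩ | ⟨⟨t, ht⟩, hα⟩)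
    · exact Or.inr ⟨2*j-1, 2*j, by omega, by omega, by omega, Or.inr (Or.inl hα)⟩
    · exact Or.inr ⟨2*j-1, 2*j, by omega, by omega, by omega, Or.inl hα⟩
    · exact Or.inl ⟨l, by omega, le_refl l, Or.inl hα⟩
  -- Part 2: pairwise strong orthogonality
  have hpair : Γset.Pairwise (fun α β => α ≠ -β ∧ α + β ∉ Rset ∧ α - β ∉ Rset) := by
    intro α hα β hβ hne
    obtain ⟨m, s, hm, hs, rfl⟩ := hrep α hα
    obtain ⟨m', s', hm', hs', rfl⟩ := hrep β hβ
    by_cases hmm : m = m'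
    · subst hmm
      have h2 : 2*m+2 ≤ l := by
        by_contra hcon
        exact hne (by
          rw [g, g, stdVec_eq_zero (show l < 2*m+2 by omega), smul_zero, smul_zero])
      have hneg : g l m s ≠ -g l m s' := by
        intro hcon
        have hc : g l m s ⟨2*m, by omega⟩ = (-(g l m s')) ⟨2*m, by omega⟩ := by rw [hcon]
        simp only [PiLp.neg_apply, g_apply, Fin.val_mk] at hc
        rcases hs with rfl | rfl <;> rcases hs' with rfl | rfl <;>
          split_ifs at hc <;> first | omega | norm_num at hc
      rcases hs with rfl | rfl <;> rcases hs' with rfl | rfl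
      · exact absurd rfl hne
      · refine ⟨hneg, hnotin _ (not_isRoot_two _ ⟨2*m, by omega⟩ (Or.inl ?_)),
          hnotin _ (not_isRoot_two _ ⟨2*m+1, by omega⟩ (Or.inl ?_))⟩ <;>
        · simp only [PiLp.add_apply, PiLp.sub_apply, g_apply, Fin.val_mk]
          split_ifs <;> first | omega | norm_num
      · refine ⟨hneg, hnotin _ (not_isRoot_two _ ⟨2*m, by omega⟩ (Or.inl ?_)),
          hnotin _ (not_isRoot_two _ ⟨2*m+1, by omega⟩ (Or.inr ?_))⟩ <;>
        · simp only [PiLp.add_apply, PiLp.sub_apply, g_apply, Fin.val_mk]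
          split_ifs <;> first | omega | norm_num
      · exact absurd rfl hne
    · -- different blocks
      have hkey : 2*m+2 ≤ l ∨ 2*m'+2 ≤ l := by omega
      have hneg : g l m s ≠ -g l m' s' := by
        intro hcon
        have hc : g l m s ⟨2*m, by omega⟩ = (-(g l m' s')) ⟨2*m, by omega⟩ := by rw [hcon]
        simp only [PiLp.neg_apply, g_apply, Fin.val_mk] at hc
        rcases hs with rfl | rfl <;> rcases hs' with rfl | rfl <;>
          split_ifs at hc <;> first | omega | norm_num at hc
      rcases hkey with hk | hk
      · refine ⟨hneg,
          hnotin _ (not_isRoot_three _ ⟨2*m, by omega⟩ ⟨2*m+1, by omega⟩ ⟨2*m', by omega⟩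
            (Fin.ne_of_val_ne (by simp only [Fin.val_mk]; omega)) (Fin.ne_of_val_ne (by simp only [Fin.val_mk]; omega))
            (Fin.ne_of_val_ne (by simp only [Fin.val_mk]; omega)) ?_ ?_ ?_),
          hnotin _ (not_isRoot_three _ ⟨2*m, by omega⟩ ⟨2*m+1, by omega⟩ ⟨2*m', by omega⟩
            (Fin.ne_of_val_ne (by simp only [Fin.val_mk]; omega)) (Fin.ne_of_val_ne (by simp only [Fin.val_mk]; omega))
            (Fin.ne_of_val_ne (by simp only [Fin.val_mk]; omega)) ?_ ?_ ?_)⟩ <;>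
        · simp only [PiLp.add_apply, PiLp.sub_apply, g_apply, Fin.val_mk]
          rcases hs with rfl | rfl <;> rcases hs' with rfl | rfl <;>
            split_ifs <;> first | omega | norm_num
      · refine ⟨hneg,
          hnotin _ (not_isRoot_three _ ⟨2*m, by omega⟩ ⟨2*m', by omega⟩ ⟨2*m'+1, by omega⟩
            (Fin.ne_of_val_ne (by simp only [Fin.val_mk]; omega)) (Fin.ne_of_val_ne (by simp only [Fin.val_mk]; omega))
            (Fin.ne_of_val_ne (by simp only [Fin.val_mk]; omega)) ?_ ?_ ?_),
          hnotin _ (not_isRoot_three _ ⟨2*m, by omega⟩ ⟨2*m', by omega⟩ ⟨2*m'+1, by omega⟩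
            (Fin.ne_of_val_ne (by simp only [Fin.val_mk]; omega)) (Fin.ne_of_val_ne (by simp only [Fin.val_mk]; omega))
            (Fin.ne_of_val_ne (by simp only [Fin.val_mk]; omega)) ?_ ?_ ?_)⟩ <;>
        · simp only [PiLp.add_apply, PiLp.sub_apply, g_apply, Fin.val_mk]
          rcases hs with rfl | rfl <;> rcases hs' with rfl | rfl <;>
            split_ifs <;> first | omega | norm_num
  -- Part 3: cardinality of Γ
  have hrange : Γset = Set.range (fun k : Fin l => f0 l (k:ℕ)) := by
    ext x
    constructor
    · rintro (⟨j, hj1, hj2, hx | hx⟩ | ⟨⟨t, ht⟩, hx⟩)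
      · refine ⟨⟨2*j-2, by omega⟩, ?_⟩
        show f0 l (2*j-2) = x
        rw [f0_even _ _ (by omega), show 2*((2*j-2)/2)+1 = 2*j-1 by omega,
          show 2*((2*j-2)/2)+2 = 2*j by omega, hx]
      · refine ⟨⟨2*j-1, by omega⟩, ?_⟩
        show f0 l (2*j-1) = x
        rw [f0_odd _ _ (by omega), show 2*((2*j-1)/2)+1 = 2*j-1 by omega,
          show 2*((2*j-1)/2)+2 = 2*j by omega, hx]
      · refine ⟨⟨l-1, by omega⟩, ?_⟩
        show f0 l (l-1) = x
        rw [f0_even _ _ (by omega), show 2*((l-1)/2)+1 = l by omega,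
          stdVec_eq_zero (show l < 2*((l-1)/2)+2 by omega), sub_zero, hx]
    · rintro ⟨k, rfl⟩
      beta_reduce
      have hkl : (k:ℕ) < l := k.isLt
      by_cases hpar : (k:ℕ) % 2 = 0
      · by_cases hb : 2*((k:ℕ)/2)+2 ≤ l
        · refine Or.inl ⟨(k:ℕ)/2+1, by omega, by omega, Or.inl ?_⟩
          rw [f0_even _ _ hpar, show 2*((k:ℕ)/2+1)-1 = 2*((k:ℕ)/2)+1 by omega,
            show 2*((k:ℕ)/2+1) = 2*((k:ℕ)/2)+2 by omega]
        · refine Or.inr ⟨⟨(k:ℕ)/2, by omega⟩, ?_⟩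
          rw [f0_even _ _ hpar, show 2*((k:ℕ)/2)+1 = l by omega,
            stdVec_eq_zero (show l < 2*((k:ℕ)/2)+2 by omega), sub_zero]
      · refine Or.inl ⟨(k:ℕ)/2+1, by omega, by omega, Or.inr ?_⟩
        rw [f0_odd _ _ (by omega), show 2*((k:ℕ)/2+1)-1 = 2*((k:ℕ)/2)+1 by omega,
          show 2*((k:ℕ)/2+1) = 2*((k:ℕ)/2)+2 by omega]
  have hinj : Function.Injective (fun k : Fin l => f0 l (k:ℕ)) := by
    intro k k' hkk
    simp only at hkk
    have hlt1 : 2*((k:ℕ)/2) < l := by have := k.isLt; omega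
    have hm2 : (k:ℕ)/2 = (k':ℕ)/2 := by
      by_contra hc
      have h1 : f0 l (k:ℕ) ⟨2*((k:ℕ)/2), hlt1⟩ = 1 := by
        simp only [f0_apply, Fin.val_mk]
        split_ifs <;> first | omega | norm_num
      rw [hkk] at h1
      simp only [f0_apply, Fin.val_mk] at h1
      split_ifs at h1 <;> first | omega | norm_num at h1
    have hp2 : (k:ℕ) % 2 = (k':ℕ) % 2 := by
      by_contra hc
      have hcase : ((k:ℕ)%2 = 0 ∧ (k':ℕ)%2 = 1) ∨ ((k:ℕ)%2 = 1 ∧ (k':ℕ)%2 = 0) := by omega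
      have hlt : 2*((k:ℕ)/2)+1 < l := by
        have h1 := k.isLt; have h2 := k'.isLt
        rcases hcase with ⟨h3, h4⟩ | ⟨h3, h4⟩ <;> omega
      have h1 : f0 l (k:ℕ) ⟨2*((k:ℕ)/2)+1, hlt⟩ = f0 l (k':ℕ) ⟨2*((k:ℕ)/2)+1, hlt⟩ := by
        rw [hkk]
      simp only [f0_apply, Fin.val_mk] at h1
      rcases hcase with ⟨h3, h4⟩ | ⟨h3, h4⟩ <;>
        split_ifs at h1 <;> first | omega | norm_num at h1
    exact Fin.ext (by omega)
  have hcount : Γset.ncard = l := by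
    rw [hrange, ← Set.image_univ, Set.ncard_image_of_injective _ hinj, Set.ncard_univ,
      Nat.card_eq_fintype_card, Fintype.card_fin]
  exact ⟨⟨hsubset, hpair⟩, hcount, fun S hS => ncard_le (fun x => mem_R_iff x) hS⟩

end
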